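/- For integers m, n ≥ 1 and 0 ≤ p ≤ q, the convolution sequence (r_i)_{i≥1} satisfies: r_i = i for 1 ≤ i ≤ p; r_i = p + ∑_{j=0}^{i-p-1} binomial(m,j) for p+1 ≤ i ≤ q; r_i = ∑_{j=0}^{i-q-1} binomial(n,j) + (q+p-i) + ∑_{j=0}^{i-p-1} binomial(m,j) for q+1 ≤ i ≤ q+p; r_i = ∑_{j=0}^{p-1} binomial(n, i-q-1-j) + binomial(m+n, i-q-p-1) + ∑_{j=0}^{q-1} binomial(m, i-p-1-j) for q+p+1 ≤ i ≤ q+p+m+n+1; and r_i = 0 for i > q+p+m+n+1. -/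

import Mathlib

/-- The sequence of `p` ones followed by the binomial coefficients
`choose m 0, …, choose m m` and then zeros (indexed from 1; the value at 0 is 0). -/
def broomSeq (m p : ℕ) : ℕ → ℕ := fun i =>
  if 1 ≤ i ∧ i ≤ p then 1
  else if p + 1 ≤ i ∧ i ≤ p + m + 1 then Nat.choose m (i - p - 1)
  else 0

/-- The convolution `r_i = ∑_{j=1}^{i} s_j * t_{i+1-j}` of the two broom sequences. -/
def convSeq (m n p q : ℕ) : ℕ → ℕ := fun i =>
  ∑ j ∈ Finset.Icc 1 i, broomSeq m p j * broomSeq n q (i + 1 - j)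

/-- A sequence (indexed from 1) is unimodal if for some `k ≥ 1` it is
nondecreasing up to `k` and nonincreasing from `k` on. -/
def Unimodal (a : ℕ → ℕ) : Prop :=
  ∃ k : ℕ, 1 ≤ k ∧ (∀ i, 1 ≤ i → i < k → a i ≤ a (i + 1)) ∧ (∀ i, k ≤ i → a (i + 1) ≤ a i)

lemma broom_one (m p j : ℕ) (h1 : 1 ≤ j) (h2 : j ≤ p) : broomSeq m p j = 1 := by
  unfold broomSeq
  rw [if_pos ⟨h1, h2⟩]

lemma broom_choose (m p j : ℕ) (h : p + 1 ≤ j) :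
    broomSeq m p j = Nat.choose m (j - p - 1) := by
  unfold broomSeq
  rw [if_neg (by omega)]
  by_cases h2 : j ≤ p + m + 1
  · rw [if_pos ⟨h, h2⟩]
  · rw [if_neg (by tauto), Nat.choose_eq_zero_of_lt (by omega)]

lemma icc_one (i : ℕ) : Finset.Icc 1 i = Finset.Ioc 0 i := by
  rw [← Finset.Icc_add_one_left_eq_Ioc]
  rfl

lemma sum_Ioc_split (a b c : ℕ) (h1 : a ≤ b) (h2 : b ≤ c) (f : ℕ → ℕ) :
    ∑ j ∈ Finset.Ioc a c, f j = ∑ j ∈ Finset.Ioc a b, f j + ∑ j ∈ Finset.Ioc b c, f j :=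
  (Finset.sum_Ioc_consecutive f h1 h2).symm

lemma sum_Ioc_reindex (a b : ℕ) (f : ℕ → ℕ) :
    ∑ j ∈ Finset.Ioc a b, f j = ∑ k ∈ Finset.range (b - a), f (a + 1 + k) := by
  rw [← Finset.Icc_add_one_left_eq_Ioc, ← Finset.Ico_add_one_right_eq_Icc, Finset.sum_Ico_eq_sum_range,
    show b + 1 - (a + 1) = b - a from by omega]

lemma vandermonde (m n L : ℕ) :
    ∑ k ∈ Finset.range (L + 1), Nat.choose m k * Nat.choose n (L - k)
      = Nat.choose (m + n) L := by
  rw [Nat.add_choose_eq, Finset.Nat.sum_antidiagonal_eq_sum_range_succ_mk]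

lemma conv_tail (m n p q : ℕ) (hpq : p ≤ q) (i : ℕ) (hi : q + p + 1 ≤ i) :
    convSeq m n p q i =
      (∑ j ∈ Finset.range p, Nat.choose n (i - q - 1 - j))
        + Nat.choose (m + n) (i - q - p - 1)
        + ∑ j ∈ Finset.range q, Nat.choose m (i - p - 1 - j) := by
  unfold convSeq
  rw [icc_one, sum_Ioc_split 0 p i (by omega) (by omega),
    sum_Ioc_split p (i - q) i (by omega) (by omega)]
  have hA : ∑ j ∈ Finset.Ioc 0 p, broomSeq m p j * broomSeq n q (i + 1 - j)
      = ∑ j ∈ Finset.range p, Nat.choose n (i - q - 1 - j) := by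
    rw [sum_Ioc_reindex]
    apply Finset.sum_congr (congrArg Finset.range (by omega))
    intro k hk
    simp only [Finset.mem_range] at hk
    rw [broom_one m p _ (by omega) (by omega), broom_choose n q _ (by omega), one_mul]
    exact congrArg _ (by omega)
  have hB1 : ∑ j ∈ Finset.Ioc p (i - q), broomSeq m p j * broomSeq n q (i + 1 - j)
      = Nat.choose (m + n) (i - q - p - 1) := by
    rw [sum_Ioc_reindex, ← vandermonde m n (i - q - p - 1)]
    apply Finset.sum_congr (congrArg Finset.range (by omega))
    intro k hk
    simp only [Finset.mem_range] at hk
    rw [broom_choose m p _ (by omega), broom_choose n q _ (by omega)]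
    congr 1
    · exact congrArg _ (by omega)
    · exact congrArg _ (by omega)
  have hB2 : ∑ j ∈ Finset.Ioc (i - q) i, broomSeq m p j * broomSeq n q (i + 1 - j)
      = ∑ j ∈ Finset.range q, Nat.choose m (i - p - 1 - j) := by
    rw [sum_Ioc_reindex, ← Finset.sum_range_reflect (fun j => Nat.choose m (i - p - 1 - j)) q]
    apply Finset.sum_congr (congrArg Finset.range (by omega))
    intro k hk
    simp only [Finset.mem_range] at hk
    rw [broom_choose m p _ (by omega), broom_one n q _ (by omega) (by omega), mul_one]
    exact congrArg _ (by omega)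
  rw [hA, hB1, hB2]
  omega

theorem convSeq_formula (m n p q : ℕ) (hm : 1 ≤ m) (hn : 1 ≤ n) (hpq : p ≤ q) :
    (∀ i, 1 ≤ i → i ≤ p → convSeq m n p q i = i) ∧
    (∀ i, p + 1 ≤ i → i ≤ q →
      convSeq m n p q i = p + ∑ j ∈ Finset.range (i - p), Nat.choose m j) ∧
    (∀ i, q + 1 ≤ i → i ≤ q + p →
      convSeq m n p q i =
        (∑ j ∈ Finset.range (i - q), Nat.choose n j) + (q + p - i)
          + ∑ j ∈ Finset.range (i - p), Nat.choose m j) ∧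
    (∀ i, q + p + 1 ≤ i → i ≤ q + p + m + n + 1 →
      convSeq m n p q i =
        (∑ j ∈ Finset.range p, Nat.choose n (i - q - 1 - j))
          + Nat.choose (m + n) (i - q - p - 1)
          + ∑ j ∈ Finset.range q, Nat.choose m (i - p - 1 - j)) ∧
    (∀ i, q + p + m + n + 1 < i → convSeq m n p q i = 0) := by
  refine ⟨?_, ?_, ?_, ?_, ?_⟩
  · -- case 1
    intro i h1 h2
    unfold convSeq
    have key : ∀ j ∈ Finset.Icc 1 i, broomSeq m p j * broomSeq n q (i + 1 - j) = 1 := by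
      intro j hj
      simp only [Finset.mem_Icc] at hj
      rw [broom_one m p j hj.1 (by omega), broom_one n q _ (by omega) (by omega), mul_one]
    rw [Finset.sum_congr rfl key, Finset.sum_const, Nat.card_Icc, smul_eq_mul]
    omega
  · -- case 2
    intro i h1 h2
    unfold convSeq
    have key : ∀ j ∈ Finset.Icc 1 i,
        broomSeq m p j * broomSeq n q (i + 1 - j) = broomSeq m p j := by
      intro j hj
      simp only [Finset.mem_Icc] at hj
      rw [broom_one n q _ (by omega) (by omega), mul_one]
    rw [Finset.sum_congr rfl key, icc_one, sum_Ioc_split 0 p i (by omega) (by omega)]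
    have h3 : ∑ j ∈ Finset.Ioc 0 p, broomSeq m p j = p := by
      have key2 : ∀ j ∈ Finset.Ioc 0 p, broomSeq m p j = 1 := by
        intro j hj
        simp only [Finset.mem_Ioc] at hj
        exact broom_one m p j (by omega) hj.2
      rw [Finset.sum_congr rfl key2, Finset.sum_const, Nat.card_Ioc, smul_eq_mul]
      omega
    have h4 : ∑ j ∈ Finset.Ioc p i, broomSeq m p j
        = ∑ j ∈ Finset.range (i - p), Nat.choose m j := by
      rw [sum_Ioc_reindex]
      apply Finset.sum_congr rfl
      intro k hk
      simp only [Finset.mem_range] at hk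
      rw [broom_choose m p _ (by omega)]
      exact congrArg _ (by omega)
    rw [h3, h4]
  · -- case 3
    intro i h1 h2
    unfold convSeq
    rw [icc_one, sum_Ioc_split 0 (i - q) i (by omega) (by omega),
      sum_Ioc_split (i - q) p i (by omega) (by omega)]
    have hA : ∑ j ∈ Finset.Ioc 0 (i - q), broomSeq m p j * broomSeq n q (i + 1 - j)
        = ∑ j ∈ Finset.range (i - q), Nat.choose n j := by
      rw [sum_Ioc_reindex, ← Finset.sum_range_reflect (fun j => Nat.choose n j) (i - q)]
      apply Finset.sum_congr rfl
      intro k hk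
      simp only [Finset.mem_range] at hk
      rw [broom_one m p _ (by omega) (by omega), broom_choose n q _ (by omega), one_mul]
      exact congrArg _ (by omega)
    have hB : ∑ j ∈ Finset.Ioc (i - q) p, broomSeq m p j * broomSeq n q (i + 1 - j)
        = q + p - i := by
      have key : ∀ j ∈ Finset.Ioc (i - q) p,
          broomSeq m p j * broomSeq n q (i + 1 - j) = 1 := by
        intro j hj
        simp only [Finset.mem_Ioc] at hj
        rw [broom_one m p _ (by omega) (by omega), broom_one n q _ (by omega) (by omega),
          mul_one]
      rw [Finset.sum_congr rfl key, Finset.sum_const, Nat.card_Ioc, smul_eq_mul]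
      omega
    have hC : ∑ j ∈ Finset.Ioc p i, broomSeq m p j * broomSeq n q (i + 1 - j)
        = ∑ j ∈ Finset.range (i - p), Nat.choose m j := by
      rw [sum_Ioc_reindex]
      apply Finset.sum_congr rfl
      intro k hk
      simp only [Finset.mem_range] at hk
      rw [broom_choose m p _ (by omega), broom_one n q _ (by omega) (by omega), mul_one]
      exact congrArg _ (by omega)
    rw [hA, hB, hC]
    omega
  · -- case 4
    intro i h1 _
    exact conv_tail m n p q hpq i h1
  · -- case 5
    intro i h1
    rw [conv_tail m n p q hpq i (by omega)]
    have e1 : ∑ j ∈ Finset.range p, Nat.choose n (i - q - 1 - j) = 0 := by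
      apply Finset.sum_eq_zero
      intro j hj
      simp only [Finset.mem_range] at hj
      exact Nat.choose_eq_zero_of_lt (by omega)
    have e2 : ∑ j ∈ Finset.range q, Nat.choose m (i - p - 1 - j) = 0 := by
      apply Finset.sum_eq_zero
      intro j hj
      simp only [Finset.mem_range] at hj
      exact Nat.choose_eq_zero_of_lt (by omega)
    rw [e1, e2, Nat.choose_eq_zero_of_lt (by omega)]
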